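/- Let w_1, ..., w_n be positive reals summing to 1. Then the function π on the symmetric group S_n defined by π(z) = ∏_{r=1}^n w_{z_r} / (∑_{j=r}^n w_{z_j}) is a probability mass function, i.e., ∑_{z ∈ S_n} π(z) = 1. -/

import Mathlib

lemma mtf_filter_succ_eq (n : ℕ) (r : Fin n) :
    (Finset.univ.filter (fun j : Fin (n+1) => r.succ ≤ j)) =
      (Finset.univ.filter (fun j : Fin n => r ≤ j)).map
        ⟨Fin.succ, Fin.succ_injective n⟩ := by
  ext j
  induction j using Fin.cases with
  | zero => simp [Fin.le_zero_iff, Fin.succ_ne_zero]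
  | succ k => simp [Fin.succ_le_succ_iff]

lemma mtf_key (n : ℕ) (w : Fin n → ℝ) (hw : ∀ i, 0 < w i) :
    ∑ z : Equiv.Perm (Fin n),
      ∏ r : Fin n, w (z r) / (∑ j ∈ Finset.univ.filter (fun j => r ≤ j), w (z j)) = 1 := by
  induction n with
  | zero => simp
  | succ n ih =>
    have hT : (0:ℝ) < ∑ i, w i := Finset.sum_pos (fun i _ => hw i) ⟨⟨0, Nat.succ_pos n⟩, Finset.mem_univ _⟩
    rw [← Equiv.sum_comp (Equiv.Perm.decomposeFin (n := n)).symm, Fintype.sum_prod_type]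
    have hmain : ∀ p : Fin (n+1), ∀ σ : Equiv.Perm (Fin n),
        (∏ r : Fin (n+1),
          w ((Equiv.Perm.decomposeFin.symm (p, σ)) r) /
            (∑ j ∈ Finset.univ.filter (fun j => r ≤ j),
              w ((Equiv.Perm.decomposeFin.symm (p, σ)) j))) =
        (w p / ∑ i, w i) *
          ∏ r : Fin n,
            (fun k => w (Equiv.swap 0 p k.succ)) (σ r) /
              (∑ j ∈ Finset.univ.filter (fun j => r ≤ j),
                (fun k => w (Equiv.swap 0 p k.succ)) (σ j)) := by
      intro p σ
      rw [Fin.prod_univ_succ]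
      congr 1
      · have h1 : (Finset.univ.filter (fun j : Fin (n+1) => (0:Fin (n+1)) ≤ j)) = Finset.univ := by
          simp [Fin.zero_le]
        rw [h1, Equiv.sum_comp (Equiv.Perm.decomposeFin.symm (p, σ)) w,
          Equiv.Perm.decomposeFin_symm_apply_zero]
      · apply Finset.prod_congr rfl
        intro r _
        rw [mtf_filter_succ_eq, Finset.sum_map]
        simp only [Function.Embedding.coeFn_mk, Equiv.Perm.decomposeFin_symm_apply_succ]
    calc ∑ p : Fin (n+1), ∑ σ : Equiv.Perm (Fin n),
          (∏ r : Fin (n+1),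
            w ((Equiv.Perm.decomposeFin.symm (p, σ)) r) /
              (∑ j ∈ Finset.univ.filter (fun j => r ≤ j),
                w ((Equiv.Perm.decomposeFin.symm (p, σ)) j)))
        = ∑ p : Fin (n+1), (w p / ∑ i, w i) * 1 := by
          apply Finset.sum_congr rfl
          intro p _
          simp only [hmain p]
          rw [← Finset.mul_sum, ih (fun k => w (Equiv.swap 0 p k.succ)) (fun k => hw _)]
      _ = 1 := by
          simp only [mul_one]
          rw [← Finset.sum_div, div_self (ne_of_gt hT)]

theorem mtf_stationary_sums_to_one (n : ℕ) (w : Fin n → ℝ)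
    (hw : ∀ i, 0 < w i) (hsum : ∑ i, w i = 1) :
    ∑ z : Equiv.Perm (Fin n),
      ∏ r : Fin n, w (z r) / (∑ j ∈ Finset.univ.filter (fun j => r ≤ j), w (z j)) = 1 := by
  exact mtf_key n w hw
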